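/- Define f(q) = 2 - q + 4q² - 3q³ on [0,1]. Then max_{q ∈ [0,1]} f(q) = f((4+√7)/9), and the infimum of p ∈ [0,1] such that the equation q = (1/2)(1-p)(2q - q² + 4q³ - 3q⁴) has no solution q ∈ (0,1] equals 1 - 2/f((4+√7)/9). -/
import Mathlib


/-- With `f q = 2 - q + 4q² - 3q³`, the maximum of `f` on `[0,1]` is attained at
`q = (4+√7)/9`, and the infimum of `p ∈ [0,1]` for which the fixed-point equation
`q = (1/2)(1-p)(2q - q² + 4q³ - 3q⁴)` has no solution `q ∈ (0,1]` equals
`1 - 2 / f((4+√7)/9)`. -/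
theorem gw_tree_beats_regular_tree :
    (∀ q ∈ Set.Icc (0:ℝ) 1,
        2 - q + 4*q^2 - 3*q^3
          ≤ 2 - (4+Real.sqrt 7)/9 + 4*((4+Real.sqrt 7)/9)^2 - 3*((4+Real.sqrt 7)/9)^3) ∧
    sInf {p : ℝ | p ∈ Set.Icc (0:ℝ) 1 ∧
        ∀ q ∈ Set.Ioc (0:ℝ) 1, q ≠ (1/2)*(1-p)*(2*q - q^2 + 4*q^3 - 3*q^4)}
      = 1 - 2 / (2 - (4+Real.sqrt 7)/9 + 4*((4+Real.sqrt 7)/9)^2 - 3*((4+Real.sqrt 7)/9)^3) := by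
  obtain ⟨s, hs⟩ : ∃ s : ℝ, Real.sqrt 7 = s := ⟨_, rfl⟩
  have h7 : s^2 = 7 := by rw [← hs]; exact Real.sq_sqrt (by norm_num)
  have hs0 : (0:ℝ) ≤ s := by rw [← hs]; exact Real.sqrt_nonneg 7
  have hs2 : 2 < s := by nlinarith
  have hs3 : s < 3 := by nlinarith
  rw [hs]
  obtain ⟨M, hMdef⟩ : ∃ M : ℝ, M = 2 - (4+s)/9 + 4*((4+s)/9)^2 - 3*((4+s)/9)^3 := ⟨_, rfl⟩
  have hMval : M = (506 + 14*s)/243 := by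
    rw [hMdef]; linear_combination (-s/243) * h7
  -- Part 1
  have part1 : ∀ q ∈ Set.Icc (0:ℝ) 1, 2 - q + 4*q^2 - 3*q^3 ≤ M := by
    intro q hq
    obtain ⟨hq0, hq1⟩ := hq
    have hr : (0:ℝ) ≤ q - (4 - 2*s)/9 := by nlinarith
    have key := mul_nonneg (sq_nonneg (q - (4+s)/9)) hr
    have hid : M - (2 - q + 4*q^2 - 3*q^3)
        = 3*(q - (4+s)/9)^2*(q - (4-2*s)/9) := by
      rw [hMdef]; linear_combination (q/9 - (s+4)/81) * h7
    linarith
  have hM2 : 2 < M := by rw [hMval]; linarith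
  have hM0 : 0 < M := by linarith
  have hps0 : 0 < 1 - 2/M := by
    have : 2 / M < 1 := by rw [div_lt_one hM0]; linarith
    linarith
  have hps1 : 1 - 2/M < 1 := by
    have : 0 < 2 / M := by positivity
    linarith
  -- fixed point characterization
  have hsolve : ∀ p q : ℝ, 0 < q →
      (q = (1/2)*(1-p)*(2*q - q^2 + 4*q^3 - 3*q^4) ↔
        (1-p)*(2 - q + 4*q^2 - 3*q^3) = 2) := by
    intro p q hq
    constructor
    · intro h
      have hz : q * ((1-p)*(2 - q + 4*q^2 - 3*q^3) - 2) = 0 := by linear_combination -2*h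
      rcases mul_eq_zero.mp hz with h1 | h2
      · exact absurd h1 (ne_of_gt hq)
      · linarith
    · intro h
      linear_combination (-q/2) * h
  -- membership of (1-2/M, 1] in the set
  have hmem : ∀ p : ℝ, 1 - 2/M < p → p ≤ 1 →
      p ∈ {p : ℝ | p ∈ Set.Icc (0:ℝ) 1 ∧
        ∀ q ∈ Set.Ioc (0:ℝ) 1, q ≠ (1/2)*(1-p)*(2*q - q^2 + 4*q^3 - 3*q^4)} := by
    intro p hp1 hp2
    refine ⟨⟨by linarith, hp2⟩, ?_⟩
    intro q hq habs
    obtain ⟨hq0, hq1⟩ := hq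
    have heq : (1-p)*(2 - q + 4*q^2 - 3*q^3) = 2 := (hsolve p q hq0).mp habs
    have hfle : 2 - q + 4*q^2 - 3*q^3 ≤ M := part1 q ⟨le_of_lt hq0, hq1⟩
    have h1p : 0 ≤ 1 - p := by linarith
    have h1p' : 1 - p < 2 / M := by linarith
    have hle : (1-p)*(2 - q + 4*q^2 - 3*q^3) ≤ (1-p)*M :=
      mul_le_mul_of_nonneg_left hfle h1p
    have h2 : (1-p)*M < (2/M)*M := mul_lt_mul_of_pos_right h1p' hM0
    have h3 : (2/M)*M = 2 := by field_simp
    linarith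
  -- lower bound
  have hlb : ∀ p ∈ {p : ℝ | p ∈ Set.Icc (0:ℝ) 1 ∧
        ∀ q ∈ Set.Ioc (0:ℝ) 1, q ≠ (1/2)*(1-p)*(2*q - q^2 + 4*q^3 - 3*q^4)},
      1 - 2/M ≤ p := by
    intro p hp
    obtain ⟨⟨hp0, hp1⟩, hnone⟩ := hp
    by_contra hcon
    push_neg at hcon
    have h1p : 2 / M < 1 - p := by linarith
    have hgc : ContinuousOn (fun q : ℝ => (1-p)*(2 - q + 4*q^2 - 3*q^3))
        (Set.Icc ((4+s)/9) 1) := by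
      apply Continuous.continuousOn; fun_prop
    have hqs0 : 0 < (4+s)/9 := by linarith
    have hqs1 : (4+s)/9 ≤ 1 := by linarith
    have hgqs : 2 < (fun q : ℝ => (1-p)*(2 - q + 4*q^2 - 3*q^3)) ((4+s)/9) := by
      have h2' : (2/M)*M < (1-p)*M := mul_lt_mul_of_pos_right h1p hM0
      have h3 : (2/M)*M = 2 := by field_simp
      simp only
      rw [← hMdef]
      linarith
    have hg1 : (fun q : ℝ => (1-p)*(2 - q + 4*q^2 - 3*q^3)) 1 ≤ 2 := by
      simp only
      nlinarith
    have hsub := intermediate_value_Icc' hqs1 hgc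
    obtain ⟨q, hqmem, hgq⟩ := hsub ⟨hg1, le_of_lt hgqs⟩
    obtain ⟨hqlo, hqhi⟩ := hqmem
    have hq0 : 0 < q := lt_of_lt_of_le hqs0 hqlo
    exact hnone q ⟨hq0, hqhi⟩ ((hsolve p q hq0).mpr hgq)
  constructor
  · intro q hq
    have := part1 q hq
    rw [hMdef] at this
    exact this
  · rw [← hMdef]
    apply csInf_eq_of_forall_ge_of_forall_gt_exists_lt
    · exact ⟨1, hmem 1 hps1 le_rfl⟩
    · exact hlb
    · intro w hw
      refine ⟨min ((1 - 2/M + w)/2) 1, hmem _ ?_ (min_le_right _ _), ?_⟩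
      · exact lt_min (by linarith) hps1
      · calc min ((1 - 2/M + w)/2) 1 ≤ (1 - 2/M + w)/2 := min_le_left _ _
          _ < w := by linarith
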